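/- arXiv:1106.0088 — 2 statements merged into one kernel-verified Lean document; each statement's English description precedes it below -/
import Mathlib

section
/- In ℝ², let F := {(x₁,x₂) : |x₁| + |x₂| ≤ 1} be the closed unit diamond and let Ω := [a−r, a+r] × [b−r, b+r] be the square centered at (a,b) with short radius r > 0. Let T(x) := T^F_Ω(x) be the associated (convex) minimal time function. Then the vector v(x̄₁,x̄₂) defined by the following cases is a subgradient of T at (x̄₁,x̄₂), i.e., v(x̄₁,x̄₂) ∈ ∂T(x̄₁,x̄₂): v = (1,0) if |x̄₂−b| ≤ r and x̄₁ > a+r; v = (−1,0) if |x̄₂−b| ≤ r and x̄₁ < a−r; v = (0,1) if |x̄₁−a| ≤ r and x̄₂ > b+r; v = (0,−1) if |x̄₁−a| ≤ r and x̄₂ < b−r; v = (1,1) if x̄₁ > a+r and x̄₂ > b+r; v = (−1,1) if x̄₁ < a−r and x̄₂ > b+r; v = (−1,−1) if x̄₁ < a−r and x̄₂ < b−r; v = (1,−1) if x̄₁ > a+r and x̄₂ < b−r; v = (0,0) if (x̄₁,x̄₂) ∈ Ω. -/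
open Set Metric Pointwise

/-- The minimal time function `T^F_Q(x) = inf {t ≥ 0 : Q ∩ (x + tF) ≠ ∅}`. -/
noncomputable def minTime {X : Type*} [NormedAddCommGroup X] [NormedSpace ℝ X]
    (F Q : Set X) (x : X) : ℝ :=
  sInf {t : ℝ | 0 ≤ t ∧ (Q ∩ ({x} + t • F)).Nonempty}

/-- `v` is a subgradient (in the sense of convex analysis, with the standard
pairing of `ℝ²`) of `φ : ℝ × ℝ → ℝ` at `xbar`. -/
def IsSubgradAt (φ : ℝ × ℝ → ℝ) (xbar v : ℝ × ℝ) : Prop :=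
  ∀ x : ℝ × ℝ, v.1 * (x.1 - xbar.1) + v.2 * (x.2 - xbar.2) ≤ φ x - φ xbar

noncomputable def gg (c r s : ℝ) : ℝ := max (|s - c| - r) 0

lemma key (a b r : ℝ) (hr : 0 < r) (x : ℝ × ℝ) :
    minTime {p : ℝ × ℝ | |p.1| + |p.2| ≤ 1}
      (Set.Icc (a - r) (a + r) ×ˢ Set.Icc (b - r) (b + r)) x
      = gg a r x.1 + gg b r x.2 := by
  have hS : {t : ℝ | 0 ≤ t ∧ ((Set.Icc (a - r) (a + r) ×ˢ Set.Icc (b - r) (b + r)) ∩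
      ({x} + t • {p : ℝ × ℝ | |p.1| + |p.2| ≤ 1})).Nonempty} = Set.Ici (gg a r x.1 + gg b r x.2) := by
    ext t
    simp only [Set.mem_setOf_eq, Set.mem_Ici]
    constructor
    · rintro ⟨ht, q, hq, hq2⟩
      rw [Set.mem_add] at hq2
      obtain ⟨u, hu, w, hw, huw⟩ := hq2
      rw [Set.mem_singleton_iff] at hu
      obtain ⟨p, hp, hpw⟩ := hw
      simp only [Set.mem_setOf_eq] at hp
      rw [hu, ← hpw] at huw
      have hq1 := (Set.mem_prod.mp hq).1
      have hq2' := (Set.mem_prod.mp hq).2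
      simp only [Set.mem_Icc] at hq1 hq2'
      have e1 : q.1 - x.1 = t * p.1 := by
        rw [← huw]; simp [Prod.smul_def, smul_eq_mul]
      have e2 : q.2 - x.2 = t * p.2 := by
        rw [← huw]; simp [Prod.smul_def, smul_eq_mul]
      have h1 : gg a r x.1 ≤ |q.1 - x.1| := by
        unfold gg
        rw [max_le_iff]
        refine ⟨?_, abs_nonneg _⟩
        rcases abs_cases (x.1 - a) with ⟨h, _⟩ | ⟨h, _⟩ <;>
          rcases abs_cases (q.1 - x.1) with ⟨h', _⟩ | ⟨h', _⟩ <;> linarith [hq1.1, hq1.2]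
      have h2 : gg b r x.2 ≤ |q.2 - x.2| := by
        unfold gg
        rw [max_le_iff]
        refine ⟨?_, abs_nonneg _⟩
        rcases abs_cases (x.2 - b) with ⟨h, _⟩ | ⟨h, _⟩ <;>
          rcases abs_cases (q.2 - x.2) with ⟨h', _⟩ | ⟨h', _⟩ <;> linarith [hq2'.1, hq2'.2]
      have habs : |q.1 - x.1| + |q.2 - x.2| ≤ t := by
        rw [e1, e2, abs_mul, abs_mul, abs_of_nonneg ht]
        calc t * |p.1| + t * |p.2| = t * (|p.1| + |p.2|) := by ring
        _ ≤ t * 1 := mul_le_mul_of_nonneg_left hp ht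
        _ = t := by ring
      linarith
    · intro ht
      have hg1 : 0 ≤ gg a r x.1 := le_max_right _ _
      have hg2 : 0 ≤ gg b r x.2 := le_max_right _ _
      have ht0 : 0 ≤ t := by linarith
      refine ⟨ht0, ?_⟩
      set q1 := max (a - r) (min x.1 (a + r)) with hq1def
      set q2 := max (b - r) (min x.2 (b + r)) with hq2def
      have hq1m : q1 ∈ Set.Icc (a - r) (a + r) :=
        ⟨le_max_left _ _, max_le (by linarith) (min_le_right _ _)⟩
      have hq2m : q2 ∈ Set.Icc (b - r) (b + r) :=
        ⟨le_max_left _ _, max_le (by linarith) (min_le_right _ _)⟩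
      have hA1 : x.1 - (a + r) ≤ gg a r x.1 :=
        le_max_of_le_left (by linarith [le_abs_self (x.1 - a)])
      have hB1 : (a - r) - x.1 ≤ gg a r x.1 :=
        le_max_of_le_left (by linarith [neg_abs_le (x.1 - a)])
      have hA2 : x.2 - (b + r) ≤ gg b r x.2 :=
        le_max_of_le_left (by linarith [le_abs_self (x.2 - b)])
      have hB2 : (b - r) - x.2 ≤ gg b r x.2 :=
        le_max_of_le_left (by linarith [neg_abs_le (x.2 - b)])
      have hd1 : |x.1 - q1| ≤ gg a r x.1 := by
        rw [abs_le]
        constructor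
        · rcases le_total (a - r) x.1 with h | h
          · have h1 : max (a - r) x.1 = x.1 := max_eq_right h
            have h2 : q1 ≤ max (a - r) x.1 := max_le_max le_rfl (min_le_left _ _)
            rw [h1] at h2; linarith
          · have h1 : min x.1 (a + r) = x.1 := min_eq_left (by linarith)
            have : q1 = a - r := by rw [hq1def, h1, max_eq_left h]
            rw [this]; linarith
        · rcases le_total x.1 (a + r) with h | h
          · have h1 : min x.1 (a + r) = x.1 := min_eq_left h
            have h2 : min x.1 (a + r) ≤ q1 := le_max_right _ _
            rw [h1] at h2; linarith
          · have h1 : min x.1 (a + r) = a + r := min_eq_right h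
            have : q1 = a + r := by rw [hq1def, h1, max_eq_right (by linarith)]
            rw [this]; linarith
      have hd2 : |x.2 - q2| ≤ gg b r x.2 := by
        rw [abs_le]
        constructor
        · rcases le_total (b - r) x.2 with h | h
          · have h1 : max (b - r) x.2 = x.2 := max_eq_right h
            have h2 : q2 ≤ max (b - r) x.2 := max_le_max le_rfl (min_le_left _ _)
            rw [h1] at h2; linarith
          · have h1 : min x.2 (b + r) = x.2 := min_eq_left (by linarith)
            have : q2 = b - r := by rw [hq2def, h1, max_eq_left h]
            rw [this]; linarith
        · rcases le_total x.2 (b + r) with h | h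
          · have h1 : min x.2 (b + r) = x.2 := min_eq_left h
            have h2 : min x.2 (b + r) ≤ q2 := le_max_right _ _
            rw [h1] at h2; linarith
          · have h1 : min x.2 (b + r) = b + r := min_eq_right h
            have : q2 = b + r := by rw [hq2def, h1, max_eq_right (by linarith)]
            rw [this]; linarith
      refine ⟨(q1, q2), Set.mem_prod.mpr ⟨hq1m, hq2m⟩, ?_⟩
      rw [Set.mem_add]
      rcases eq_or_lt_of_le ht0 with h0 | h0
      · -- t = 0
        have e1 : q1 = x.1 := by
          have h1 := abs_nonneg (x.1 - q1); have h2 := abs_nonneg (x.2 - q2)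
          have h3 : |x.1 - q1| = 0 := by linarith
          have := abs_eq_zero.mp h3; linarith
        have e2 : q2 = x.2 := by
          have h1 := abs_nonneg (x.1 - q1); have h2 := abs_nonneg (x.2 - q2)
          have h3 : |x.2 - q2| = 0 := by linarith
          have := abs_eq_zero.mp h3; linarith
        refine ⟨x, Set.mem_singleton _, 0, ⟨(0, 0), by norm_num, by rw [← h0]; simp⟩, ?_⟩
        rw [e1, e2]; simp
      · -- t > 0
        refine ⟨x, Set.mem_singleton _, (q1 - x.1, q2 - x.2), ?_, ?_⟩
        · refine ⟨(t⁻¹ * (q1 - x.1), t⁻¹ * (q2 - x.2)), ?_, ?_⟩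
          · show |t⁻¹ * (q1 - x.1)| + |t⁻¹ * (q2 - x.2)| ≤ 1
            rw [abs_mul, abs_mul, abs_inv, abs_of_pos h0, ← mul_add,
              inv_mul_le_iff₀ h0, mul_one, abs_sub_comm q1 x.1, abs_sub_comm q2 x.2]
            linarith
          · show (t • (t⁻¹ * (q1 - x.1), t⁻¹ * (q2 - x.2)) : ℝ × ℝ) = (q1 - x.1, q2 - x.2)
            rw [Prod.smul_mk, smul_eq_mul, smul_eq_mul, ← mul_assoc, ← mul_assoc,
              mul_inv_cancel₀ (ne_of_gt h0), one_mul, one_mul]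
        · rw [Prod.ext_iff]; constructor <;> simp
  unfold minTime
  rw [hS, csInf_Ici]

lemma gg_right {c r s t : ℝ} (hr : 0 < r) (h : c + r < s) : t - s ≤ gg c r t - gg c r s := by
  have h1 : gg c r s = s - c - r := by
    unfold gg
    rw [max_eq_left, abs_of_pos (by linarith)]
    rw [abs_of_pos (by linarith)]; linarith
  have h2 : t - (c + r) ≤ gg c r t := le_max_of_le_left (by linarith [le_abs_self (t - c)])
  rw [h1]; linarith

lemma gg_left {c r s t : ℝ} (hr : 0 < r) (h : s < c - r) : s - t ≤ gg c r t - gg c r s := by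
  have h1 : gg c r s = c - s - r := by
    unfold gg
    rw [abs_of_neg (by linarith : s - c < 0), max_eq_left (by linarith)]
    ring
  have h2 : (c - r) - t ≤ gg c r t := le_max_of_le_left (by linarith [neg_abs_le (t - c)])
  rw [h1]; linarith

lemma gg_mid {c r s t : ℝ} (h : |s - c| ≤ r) : 0 ≤ gg c r t - gg c r s := by
  have h1 : gg c r s = 0 := max_eq_right (by linarith)
  have h2 : 0 ≤ gg c r t := le_max_right _ _
  rw [h1]; linarith

/-- Subgradients of the minimal time function generated by the closed unit diamond
dynamics `F = {(x₁,x₂) : |x₁| + |x₂| ≤ 1}` and a square target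
`Ω = [a−r,a+r] × [b−r,b+r]` in `ℝ²`: the explicitly given case-defined vector is a
subgradient of `T^F_Ω` at every point. -/
theorem minTime_diamond_square_subgradient
    (a b r : ℝ) (hr : 0 < r)
    (F : Set (ℝ × ℝ)) (hF : F = {p : ℝ × ℝ | |p.1| + |p.2| ≤ 1})
    (Ω : Set (ℝ × ℝ)) (hΩ : Ω = Set.Icc (a - r) (a + r) ×ˢ Set.Icc (b - r) (b + r))
    (T : ℝ × ℝ → ℝ) (hT : T = minTime F Ω)
    (xbar : ℝ × ℝ) :
    (|xbar.2 - b| ≤ r → xbar.1 > a + r → IsSubgradAt T xbar (1, 0)) ∧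
    (|xbar.2 - b| ≤ r → xbar.1 < a - r → IsSubgradAt T xbar (-1, 0)) ∧
    (|xbar.1 - a| ≤ r → xbar.2 > b + r → IsSubgradAt T xbar (0, 1)) ∧
    (|xbar.1 - a| ≤ r → xbar.2 < b - r → IsSubgradAt T xbar (0, -1)) ∧
    (xbar.1 > a + r → xbar.2 > b + r → IsSubgradAt T xbar (1, 1)) ∧
    (xbar.1 < a - r → xbar.2 > b + r → IsSubgradAt T xbar (-1, 1)) ∧
    (xbar.1 < a - r → xbar.2 < b - r → IsSubgradAt T xbar (-1, -1)) ∧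
    (xbar.1 > a + r → xbar.2 < b - r → IsSubgradAt T xbar (1, -1)) ∧
    (xbar ∈ Ω → IsSubgradAt T xbar (0, 0)) := by
  have hk : ∀ y : ℝ × ℝ, T y = gg a r y.1 + gg b r y.2 := by
    intro y; rw [hT, hF, hΩ]; exact key a b r hr y
  refine ⟨?_, ?_, ?_, ?_, ?_, ?_, ?_, ?_, ?_⟩
  · intro h1 h2 x
    rw [hk x, hk xbar]; simp only
    linarith [@gg_right a r xbar.1 x.1 hr h2, @gg_mid b r xbar.2 x.2 h1]
  · intro h1 h2 x
    rw [hk x, hk xbar]; simp only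
    linarith [@gg_left a r xbar.1 x.1 hr h2, @gg_mid b r xbar.2 x.2 h1]
  · intro h1 h2 x
    rw [hk x, hk xbar]; simp only
    linarith [@gg_right b r xbar.2 x.2 hr h2, @gg_mid a r xbar.1 x.1 h1]
  · intro h1 h2 x
    rw [hk x, hk xbar]; simp only
    linarith [@gg_left b r xbar.2 x.2 hr h2, @gg_mid a r xbar.1 x.1 h1]
  · intro h1 h2 x
    rw [hk x, hk xbar]; simp only
    linarith [@gg_right a r xbar.1 x.1 hr h1, @gg_right b r xbar.2 x.2 hr h2]
  · intro h1 h2 x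
    rw [hk x, hk xbar]; simp only
    linarith [@gg_left a r xbar.1 x.1 hr h1, @gg_right b r xbar.2 x.2 hr h2]
  · intro h1 h2 x
    rw [hk x, hk xbar]; simp only
    linarith [@gg_left a r xbar.1 x.1 hr h1, @gg_left b r xbar.2 x.2 hr h2]
  · intro h1 h2 x
    rw [hk x, hk xbar]; simp only
    linarith [@gg_right a r xbar.1 x.1 hr h1, @gg_left b r xbar.2 x.2 hr h2]
  · intro hmem x
    rw [hΩ, Set.mem_prod, Set.mem_Icc, Set.mem_Icc] at hmem
    have h1 : |xbar.1 - a| ≤ r := abs_le.mpr ⟨by linarith [hmem.1.1], by linarith [hmem.1.2]⟩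
    have h2 : |xbar.2 - b| ≤ r := abs_le.mpr ⟨by linarith [hmem.2.1], by linarith [hmem.2.2]⟩
    rw [hk x, hk xbar]; simp only
    linarith [@gg_mid a r xbar.1 x.1 h1, @gg_mid b r xbar.2 x.2 h2]
end

section
/- In ℝ², let F := [−1,1] × [−1,1] and let Ω := [a−r, a+r] × [b−r, b+r] be the square centered at (a,b) with short radius r > 0. Let T(x) := T^F_Ω(x) be the associated (convex) minimal time function. Then the vector v(x̄₁,x̄₂) defined by the following cases is a subgradient of T at (x̄₁,x̄₂), i.e., v(x̄₁,x̄₂) ∈ ∂T(x̄₁,x̄₂): v = (1,0) if |x̄₂−b| ≤ x̄₁−a and x̄₁ > a+r; v = (−1,0) if |x̄₂−b| ≤ a−x̄₁ and x̄₁ < a−r; v = (0,1) if |x̄₁−a| ≤ x̄₂−b and x̄₂ > b+r; v = (0,−1) if |x̄₁−a| ≤ b−x̄₂ and x̄₂ < b−r; v = (0,0) if (x̄₁,x̄₂) ∈ Ω. -/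
open Set Metric Pointwise

lemma minTime_eq (a b r : ℝ) (hr : 0 < r) (x : ℝ × ℝ) :
    minTime (Set.Icc (-1 : ℝ) 1 ×ˢ Set.Icc (-1 : ℝ) 1)
      (Set.Icc (a - r) (a + r) ×ˢ Set.Icc (b - r) (b + r)) x
      = max 0 (max (|x.1 - a| - r) (|x.2 - b| - r)) := by
  set M := max 0 (max (|x.1 - a| - r) (|x.2 - b| - r)) with hM
  have hM0 : 0 ≤ M := le_max_left _ _
  have hSet : {t : ℝ | 0 ≤ t ∧
      ((Set.Icc (a - r) (a + r) ×ˢ Set.Icc (b - r) (b + r)) ∩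
        ({x} + t • (Set.Icc (-1 : ℝ) 1 ×ˢ Set.Icc (-1 : ℝ) 1))).Nonempty}
      = Set.Ici M := by
    ext t
    simp only [Set.mem_setOf_eq, Set.mem_Ici]
    constructor
    · rintro ⟨ht0, q, hqΩ, hqF⟩
      rw [Set.mem_add] at hqF
      obtain ⟨u, hu, v, hv, huv⟩ := hqF
      rw [Set.mem_singleton_iff] at hu
      obtain ⟨f, hf, hfv⟩ := hv
      rw [Set.mem_prod, Set.mem_Icc, Set.mem_Icc] at hf hqΩ
      have hv1 : v.1 = t * f.1 := by rw [← hfv]; rfl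
      have hv2 : v.2 = t * f.2 := by rw [← hfv]; rfl
      have hq1 : q.1 = x.1 + t * f.1 := by rw [← huv, hu, Prod.fst_add, hv1]
      have hq2 : q.2 = x.2 + t * f.2 := by rw [← huv, hu, Prod.snd_add, hv2]
      have htf1 : |t * f.1| ≤ t := by
        rw [abs_mul, abs_of_nonneg ht0]
        nlinarith [abs_le.mpr ⟨hf.1.1, hf.1.2⟩, abs_nonneg f.1]
      have htf2 : |t * f.2| ≤ t := by
        rw [abs_mul, abs_of_nonneg ht0]
        nlinarith [abs_le.mpr ⟨hf.2.1, hf.2.2⟩, abs_nonneg f.2]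
      have h1 : |x.1 - a| ≤ r + t := by
        have := abs_le.mp htf1
        rw [abs_le]; constructor <;> nlinarith [hqΩ.1.1, hqΩ.1.2]
      have h2 : |x.2 - b| ≤ r + t := by
        have := abs_le.mp htf2
        rw [abs_le]; constructor <;> nlinarith [hqΩ.2.1, hqΩ.2.2]
      exact max_le ht0 (max_le (by linarith) (by linarith))
    · intro hMt
      have ht0 : 0 ≤ t := le_trans hM0 hMt
      have h1 : |x.1 - a| ≤ r + t := by
        have : |x.1 - a| - r ≤ M := le_max_of_le_right (le_max_left _ _)
        linarith
      have h2 : |x.2 - b| ≤ r + t := by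
        have : |x.2 - b| - r ≤ M := le_max_of_le_right (le_max_right _ _)
        linarith
      refine ⟨ht0, ?_⟩
      set q1 := max (a - r) (min (a + r) x.1) with hq1def
      set q2 := max (b - r) (min (b + r) x.2) with hq2def
      have hq1l : a - r ≤ q1 := le_max_left _ _
      have hq1r : q1 ≤ a + r := max_le (by linarith) (min_le_left _ _)
      have hq2l : b - r ≤ q2 := le_max_left _ _
      have hq2r : q2 ≤ b + r := max_le (by linarith) (min_le_left _ _)
      have hd1 : |q1 - x.1| ≤ t := by
        rcases le_total x.1 (a - r) with h | h
        · have hq : q1 = a - r := by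
            rw [hq1def, min_eq_right (by linarith), max_eq_left h]
          rw [hq, abs_le]
          have := abs_le.mp h1; constructor <;> linarith
        · rcases le_total x.1 (a + r) with h' | h'
          · have hq : q1 = x.1 := by rw [hq1def, min_eq_right h', max_eq_right h]
            rw [hq]; simpa using ht0
          · have hq : q1 = a + r := by rw [hq1def, min_eq_left h', max_eq_right (by linarith)]
            rw [hq, abs_le]
            have := abs_le.mp h1; constructor <;> linarith
      have hd2 : |q2 - x.2| ≤ t := by
        rcases le_total x.2 (b - r) with h | h
        · have hq : q2 = b - r := by
            rw [hq2def, min_eq_right (by linarith), max_eq_left h]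
          rw [hq, abs_le]
          have := abs_le.mp h2; constructor <;> linarith
        · rcases le_total x.2 (b + r) with h' | h'
          · have hq : q2 = x.2 := by rw [hq2def, min_eq_right h', max_eq_right h]
            rw [hq]; simpa using ht0
          · have hq : q2 = b + r := by rw [hq2def, min_eq_left h', max_eq_right (by linarith)]
            rw [hq, abs_le]
            have := abs_le.mp h2; constructor <;> linarith
      rcases eq_or_lt_of_le ht0 with ht | ht
      · -- t = 0
        have hx1 : q1 = x.1 := by
          have := abs_le.mp hd1; have h := abs_nonneg (q1 - x.1); rw [← ht] at hd1
          nlinarith [abs_le.mp hd1]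
        have hx2 : q2 = x.2 := by
          rw [← ht] at hd2
          nlinarith [abs_le.mp hd2, abs_nonneg (q2 - x.2)]
        refine ⟨x, ?_, ?_⟩
        · rw [Set.mem_prod, Set.mem_Icc, Set.mem_Icc]
          exact ⟨⟨by rw [← hx1]; exact hq1l, by rw [← hx1]; exact hq1r⟩,
            ⟨by rw [← hx2]; exact hq2l, by rw [← hx2]; exact hq2r⟩⟩
        · have h0F : ((0 : ℝ), (0 : ℝ)) ∈ Set.Icc (-1 : ℝ) 1 ×ˢ Set.Icc (-1 : ℝ) 1 := by
            constructor <;> constructor <;> norm_num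
          have := Set.add_mem_add (Set.mem_singleton x)
            (Set.smul_mem_smul_set (a := t) h0F)
          simpa [Prod.mk_zero_zero] using this
      · -- t > 0
        have hf1 : |(q1 - x.1) / t| ≤ 1 := by
          rw [abs_div, abs_of_pos ht, div_le_one ht]; exact hd1
        have hf2 : |(q2 - x.2) / t| ≤ 1 := by
          rw [abs_div, abs_of_pos ht, div_le_one ht]; exact hd2
        have hfF : ((q1 - x.1) / t, (q2 - x.2) / t) ∈
            Set.Icc (-1 : ℝ) 1 ×ˢ Set.Icc (-1 : ℝ) 1 := by
          rw [Set.mem_prod, Set.mem_Icc, Set.mem_Icc]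
          exact ⟨abs_le.mp hf1, abs_le.mp hf2⟩
        refine ⟨(q1, q2), ?_, ?_⟩
        · rw [Set.mem_prod, Set.mem_Icc, Set.mem_Icc]
          exact ⟨⟨hq1l, hq1r⟩, ⟨hq2l, hq2r⟩⟩
        · have := Set.add_mem_add (Set.mem_singleton x)
            (Set.smul_mem_smul_set (a := t) hfF)
          have heq : x + t • (((q1 - x.1) / t, (q2 - x.2) / t) : ℝ × ℝ) = (q1, q2) := by
            have hne : t ≠ 0 := ne_of_gt ht
            have e1 : t * ((q1 - x.1) / t) = q1 - x.1 := by
              rw [mul_comm, div_mul_cancel₀ _ hne]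
            have e2 : t * ((q2 - x.2) / t) = q2 - x.2 := by
              rw [mul_comm, div_mul_cancel₀ _ hne]
            rw [Prod.smul_mk, smul_eq_mul, smul_eq_mul, e1, e2, Prod.ext_iff]
            exact ⟨by rw [Prod.fst_add]; show x.1 + (q1 - x.1) = q1; ring,
              by rw [Prod.snd_add]; show x.2 + (q2 - x.2) = q2; ring⟩
          rwa [heq] at this
  rw [minTime, hSet, csInf_Ici]

/-- Subgradients of the minimal time function generated by the square dynamics
`F = [−1,1] × [−1,1]` and a square target `Ω = [a−r,a+r] × [b−r,b+r]` in `ℝ²`: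
the explicitly given case-defined vector is a subgradient of `T^F_Ω`. -/
theorem minTime_square_square_subgradient
    (a b r : ℝ) (hr : 0 < r)
    (F : Set (ℝ × ℝ)) (hF : F = Set.Icc (-1 : ℝ) 1 ×ˢ Set.Icc (-1 : ℝ) 1)
    (Ω : Set (ℝ × ℝ)) (hΩ : Ω = Set.Icc (a - r) (a + r) ×ˢ Set.Icc (b - r) (b + r))
    (T : ℝ × ℝ → ℝ) (hT : T = minTime F Ω)
    (xbar : ℝ × ℝ) :
    (|xbar.2 - b| ≤ xbar.1 - a → xbar.1 > a + r → IsSubgradAt T xbar (1, 0)) ∧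
    (|xbar.2 - b| ≤ a - xbar.1 → xbar.1 < a - r → IsSubgradAt T xbar (-1, 0)) ∧
    (|xbar.1 - a| ≤ xbar.2 - b → xbar.2 > b + r → IsSubgradAt T xbar (0, 1)) ∧
    (|xbar.1 - a| ≤ b - xbar.2 → xbar.2 < b - r → IsSubgradAt T xbar (0, -1)) ∧
    (xbar ∈ Ω → IsSubgradAt T xbar (0, 0)) := by
  have hg : ∀ x : ℝ × ℝ, T x = max 0 (max (|x.1 - a| - r) (|x.2 - b| - r)) := by
    intro x
    rw [hT, hF, hΩ, minTime_eq a b r hr x]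
  refine ⟨?_, ?_, ?_, ?_, ?_⟩
  · intro h h' x
    have hxb : T xbar = xbar.1 - a - r := by
      rw [hg xbar, abs_of_pos (show (0:ℝ) < xbar.1 - a by linarith),
        max_eq_left (show |xbar.2 - b| - r ≤ xbar.1 - a - r by linarith),
        max_eq_right (show (0:ℝ) ≤ xbar.1 - a - r by linarith)]
    have h2 : |x.1 - a| - r ≤ T x := by
      rw [hg x]; exact le_max_of_le_right (le_max_left _ _)
    have h3 := le_abs_self (x.1 - a)
    simp only [hxb]
    nlinarith
  · intro h h' x
    have hxb : T xbar = a - xbar.1 - r := by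
      rw [hg xbar, abs_of_neg (show xbar.1 - a < 0 by linarith),
        max_eq_left (show |xbar.2 - b| - r ≤ -(xbar.1 - a) - r by linarith),
        max_eq_right (show (0:ℝ) ≤ -(xbar.1 - a) - r by linarith)]
      ring
    have h2 : |x.1 - a| - r ≤ T x := by
      rw [hg x]; exact le_max_of_le_right (le_max_left _ _)
    have h3 := neg_abs_le (x.1 - a)
    simp only [hxb]
    nlinarith
  · intro h h' x
    have hxb : T xbar = xbar.2 - b - r := by
      rw [hg xbar, abs_of_pos (show (0:ℝ) < xbar.2 - b by linarith),
        max_eq_right (show |xbar.1 - a| - r ≤ xbar.2 - b - r by linarith),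
        max_eq_right (show (0:ℝ) ≤ xbar.2 - b - r by linarith)]
    have h2 : |x.2 - b| - r ≤ T x := by
      rw [hg x]; exact le_max_of_le_right (le_max_right _ _)
    have h3 := le_abs_self (x.2 - b)
    simp only [hxb]
    nlinarith
  · intro h h' x
    have hxb : T xbar = b - xbar.2 - r := by
      rw [hg xbar, abs_of_neg (show xbar.2 - b < 0 by linarith),
        max_eq_right (show |xbar.1 - a| - r ≤ -(xbar.2 - b) - r by linarith),
        max_eq_right (show (0:ℝ) ≤ -(xbar.2 - b) - r by linarith)]
      ring
    have h2 : |x.2 - b| - r ≤ T x := by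
      rw [hg x]; exact le_max_of_le_right (le_max_right _ _)
    have h3 := neg_abs_le (x.2 - b)
    simp only [hxb]
    nlinarith
  · intro hx x
    rw [hΩ, Set.mem_prod, Set.mem_Icc, Set.mem_Icc] at hx
    have h1 : |xbar.1 - a| ≤ r := abs_le.mpr ⟨by linarith [hx.1.1], by linarith [hx.1.2]⟩
    have h2 : |xbar.2 - b| ≤ r := abs_le.mpr ⟨by linarith [hx.2.1], by linarith [hx.2.2]⟩
    have hxb : T xbar = 0 := by
      rw [hg xbar, max_eq_left (max_le (by linarith) (by linarith))]
    have h3 : (0:ℝ) ≤ T x := by rw [hg x]; exact le_max_left _ _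
    simp only [hxb]
    nlinarith
end
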